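/- Output parameterization: Under the stated assumptions, for any g_w ∈ ℝ^{n_w}, any u ∈ ℝ^{q_3}, and any g ∈ ℝ^N satisfying U_p g = u_ini, Y_p1 g = (y_ini − w)_1, Y_p2 g = (y_ini − w)_2, and U_f g = u, where w = −Y_p M g_w + w_0 and (·)_1, (·)_2 denote the row blocks of y_ini − w corresponding to Y_p1 and Y_p2, it holds that Y_f g = B_u u + B_w g_w + y_0. -/

import Mathlib

open Matrix


lemma isUnit_det_of_rank_eq_card {ι : Type*} [Fintype ι] [DecidableEq ι]
    (B : Matrix ι ι ℝ) (h : B.rank = Fintype.card ι) : IsUnit B.det := by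
  rw [← Matrix.isUnit_iff_isUnit_det, ← Matrix.mulVec_surjective_iff_isUnit]
  have htop : LinearMap.range B.mulVecLin = ⊤ := by
    apply Submodule.eq_top_of_finrank_eq
    rw [show Module.finrank ℝ ↥(LinearMap.range B.mulVecLin) = B.rank from rfl, h,
      Module.finrank_fintype_fun_eq_card]
  intro v
  obtain ⟨x, hx⟩ := LinearMap.range_eq_top.mp htop v
  exact ⟨x, hx⟩

lemma isUnit_det_mul_transpose {N : ℕ} {κ : Type*} [Fintype κ] [DecidableEq κ]
    (A : Matrix κ (Fin N) ℝ) (h : A.rank = Fintype.card κ) : IsUnit (A * Aᵀ).det :=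
  isUnit_det_of_rank_eq_card _ (by rw [Matrix.rank_self_mul_transpose, h])

/-- The stacked matrix `Λ = [U_p; Y_p1; U_f]`. -/
def lambdaMat {q1 s1 q3 N : ℕ} (Up : Matrix (Fin q1) (Fin N) ℝ)
    (Yp1 : Matrix (Fin s1) (Fin N) ℝ) (Uf : Matrix (Fin q3) (Fin N) ℝ) :
    Matrix (Fin q1 ⊕ (Fin s1 ⊕ Fin q3)) (Fin N) ℝ :=
  Matrix.fromRows Up (Matrix.fromRows Yp1 Uf)

/-- `B_ini = Y_f (I + Λᵀ (Λ Λᵀ)⁻¹ [0; 0; -U_f])`. -/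
noncomputable def Bini {q1 s1 q3 q4 N : ℕ} (Up : Matrix (Fin q1) (Fin N) ℝ)
    (Yp1 : Matrix (Fin s1) (Fin N) ℝ) (Uf : Matrix (Fin q3) (Fin N) ℝ)
    (Yf : Matrix (Fin q4) (Fin N) ℝ) : Matrix (Fin q4) (Fin N) ℝ :=
  Yf * ((1 : Matrix (Fin N) (Fin N) ℝ) + (lambdaMat Up Yp1 Uf)ᵀ *
    (lambdaMat Up Yp1 Uf * (lambdaMat Up Yp1 Uf)ᵀ)⁻¹ *
    Matrix.fromRows 0 (Matrix.fromRows 0 (-Uf)))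

/-- `B_u = Y_f Λᵀ (Λ Λᵀ)⁻¹ [0; 0; I]`. -/
noncomputable def Bu {q1 s1 q3 q4 N : ℕ} (Up : Matrix (Fin q1) (Fin N) ℝ)
    (Yp1 : Matrix (Fin s1) (Fin N) ℝ) (Uf : Matrix (Fin q3) (Fin N) ℝ)
    (Yf : Matrix (Fin q4) (Fin N) ℝ) : Matrix (Fin q4) (Fin q3) ℝ :=
  Yf * ((lambdaMat Up Yp1 Uf)ᵀ *
    (lambdaMat Up Yp1 Uf * (lambdaMat Up Yp1 Uf)ᵀ)⁻¹ *
    Matrix.fromRows 0 (Matrix.fromRows 0 (1 : Matrix (Fin q3) (Fin q3) ℝ)) :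
      Matrix (Fin N) (Fin q3) ℝ)

/-- `g_w* = U_pᵀ (U_p U_pᵀ)⁻¹ u_ini`. -/
noncomputable def gwStar {q1 N : ℕ} (Up : Matrix (Fin q1) (Fin N) ℝ)
    (uini : Fin q1 → ℝ) : Fin N → ℝ :=
  (Upᵀ * (Up * Upᵀ)⁻¹).mulVec uini

/-- Output parameterization: for any `g` compatible with the initial data perturbed by
the parameterized noise `w = -Y_p M g_w + w_0` and the input `u`, the output satisfies
`Y_f g = B_u u + B_w g_w + y_0`. -/
theorem output_parameterization {q1 s1 s2 q3 q4 N nw : ℕ}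
    (Up : Matrix (Fin q1) (Fin N) ℝ) (Yp1 : Matrix (Fin s1) (Fin N) ℝ)
    (Yp2 : Matrix (Fin s2) (Fin N) ℝ) (Uf : Matrix (Fin q3) (Fin N) ℝ)
    (Yf : Matrix (Fin q4) (Fin N) ℝ)
    (uini : Fin q1 → ℝ) (yini : Fin s1 ⊕ Fin s2 → ℝ)
    -- (i) `U_p` has full row rank
    (hUp : Up.rank = q1)
    -- (ii) `Λ = [U_p; Y_p1; U_f]` has full row rank
    (hΛ : (lambdaMat Up Yp1 Uf).rank = q1 + s1 + q3)
    -- (iii) the rows of `Y_p2` are linear combinations of the rows of `[U_p; Y_p1]`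
    (hF : ∃ (F1 : Matrix (Fin s2) (Fin q1) ℝ) (F2 : Matrix (Fin s2) (Fin s1) ℝ),
        Yp2 = F1 * Up + F2 * Yp1)
    -- (iv) uniqueness of the predicted output
    (huniq : ∀ g g' : Fin N → ℝ, Up.mulVec g = Up.mulVec g' →
        (Matrix.fromRows Yp1 Yp2).mulVec g = (Matrix.fromRows Yp1 Yp2).mulVec g' →
        Uf.mulVec g = Uf.mulVec g' → Yf.mulVec g = Yf.mulVec g')
    -- the columns of `M` form a basis of `ker U_p`
    (M : Matrix (Fin N) (Fin nw) ℝ)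
    (hMker : ∀ j, Up.mulVec (fun i => M i j) = 0)
    (hMindep : LinearIndependent ℝ (fun (j : Fin nw) (i : Fin N) => M i j))
    (hMspan : ∀ g : Fin N → ℝ, Up.mulVec g = 0 → ∃ c : Fin nw → ℝ, g = M.mulVec c)
    (gw : Fin nw → ℝ) (u : Fin q3 → ℝ)
    -- the parameterized noise `w = -Y_p M g_w + w_0` with `w_0 = -Y_p g_w* + y_ini`
    (w : Fin s1 ⊕ Fin s2 → ℝ)
    (hw : w = -((Matrix.fromRows Yp1 Yp2).mulVec (M.mulVec gw)) +
        (-((Matrix.fromRows Yp1 Yp2).mulVec (gwStar Up uini)) + yini))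
    (g : Fin N → ℝ)
    (hg1 : Up.mulVec g = uini)
    (hg2 : Yp1.mulVec g = fun i => (yini - w) (Sum.inl i))
    (hg3 : Yp2.mulVec g = fun i => (yini - w) (Sum.inr i))
    (hg4 : Uf.mulVec g = u) :
    Yf.mulVec g = (Bu Up Yp1 Uf Yf).mulVec u +
      (Bini Up Yp1 Uf Yf * M).mulVec gw + (Bini Up Yp1 Uf Yf).mulVec (gwStar Up uini) := by
  classical
  obtain ⟨F1, F2, hFeq⟩ := hF
  set Λ := lambdaMat Up Yp1 Uf with hΛdef
  have hdetΛ : IsUnit (Λ * Λᵀ).det :=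
    isUnit_det_mul_transpose Λ (by rw [hΛ]; simp [add_assoc])
  have hdetUp : IsUnit (Up * Upᵀ).det :=
    isUnit_det_mul_transpose Up (by simp [hUp])
  set P := Λᵀ * (Λ * Λᵀ)⁻¹ with hPdef
  have hΛP : Λ * P = 1 := by
    rw [hPdef, ← Matrix.mul_assoc, Matrix.mul_nonsing_inv _ hdetΛ]
  set h := M.mulVec gw + gwStar Up uini with hhdef
  have hUpM : Up * M = 0 := by
    ext i j
    simpa [Matrix.mul_apply, Matrix.mulVec, dotProduct] using congrFun (hMker j) i
  have hUpstar : Up.mulVec (gwStar Up uini) = uini := by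
    unfold gwStar
    rw [Matrix.mulVec_mulVec, ← Matrix.mul_assoc, Matrix.mul_nonsing_inv _ hdetUp,
      Matrix.one_mulVec]
  have hUph : Up.mulVec h = uini := by
    rw [hhdef, Matrix.mulVec_add, Matrix.mulVec_mulVec, hUpM, Matrix.zero_mulVec, hUpstar,
      zero_add]
  set Z1 := Matrix.fromRows (0 : Matrix (Fin q1) (Fin q3) ℝ)
    (Matrix.fromRows (0 : Matrix (Fin s1) (Fin q3) ℝ) (1 : Matrix (Fin q3) (Fin q3) ℝ))
    with hZ1def
  set Z := Matrix.fromRows (0 : Matrix (Fin q1) (Fin N) ℝ)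
    (Matrix.fromRows (0 : Matrix (Fin s1) (Fin N) ℝ) (-Uf)) with hZdef
  set e := Z1.mulVec u + Z.mulVec h with hedef
  set g' := h + P.mulVec e with hg'def
  have hcomp : Λ.mulVec (P.mulVec e) = e := by
    rw [Matrix.mulVec_mulVec, hΛP, Matrix.one_mulVec]
  have he1 : ∀ i, e (Sum.inl i) = 0 := by
    intro i
    simp [hedef, hZ1def, hZdef, Matrix.fromRows_mulVec, Matrix.zero_mulVec]
  have he2 : ∀ i, e (Sum.inr (Sum.inl i)) = 0 := by
    intro i
    simp [hedef, hZ1def, hZdef, Matrix.fromRows_mulVec, Matrix.zero_mulVec]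
  have he3 : ∀ i, e (Sum.inr (Sum.inr i)) = u i - Uf.mulVec h i := by
    intro i
    simp [hedef, hZ1def, hZdef, Matrix.fromRows_mulVec, Matrix.zero_mulVec,
      Matrix.one_mulVec, Matrix.neg_mulVec, sub_eq_add_neg]
  have hUpPe : Up.mulVec (P.mulVec e) = 0 := by
    funext i
    have hc := congrFun hcomp (Sum.inl i)
    simp only [hΛdef, lambdaMat, Matrix.fromRows_mulVec, Sum.elim_inl] at hc
    rw [hc, he1 i]; rfl
  have hYp1Pe : Yp1.mulVec (P.mulVec e) = 0 := by
    funext i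
    have hc := congrFun hcomp (Sum.inr (Sum.inl i))
    simp only [hΛdef, lambdaMat, Matrix.fromRows_mulVec, Sum.elim_inr, Sum.elim_inl] at hc
    rw [hc, he2 i]; rfl
  have hUfPe : ∀ i, Uf.mulVec (P.mulVec e) i = u i - Uf.mulVec h i := by
    intro i
    have hc := congrFun hcomp (Sum.inr (Sum.inr i))
    simp only [hΛdef, lambdaMat, Matrix.fromRows_mulVec, Sum.elim_inr] at hc
    rw [hc, he3 i]
  have hUpg' : Up.mulVec g' = uini := by
    rw [hg'def, Matrix.mulVec_add, hUpPe, hUph, add_zero]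
  have hYp1g' : Yp1.mulVec g' = Yp1.mulVec h := by
    rw [hg'def, Matrix.mulVec_add, hYp1Pe, add_zero]
  have hUfg' : Uf.mulVec g' = u := by
    funext i
    rw [hg'def, Matrix.mulVec_add, Pi.add_apply, hUfPe i]
    ring
  have hYph : (Matrix.fromRows Yp1 Yp2).mulVec h = yini - w := by
    funext x
    simp only [hw, hhdef, Matrix.mulVec_add, Pi.add_apply, Pi.sub_apply, Pi.neg_apply]
    ring
  have hYp1g : Yp1.mulVec g = Yp1.mulVec h := by
    funext i
    have := congrFun hYph (Sum.inl i)
    rw [hg2]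
    simp only [Matrix.fromRows_mulVec, Sum.elim_inl] at this
    exact this.symm
  have hYp2g : Yp2.mulVec g = Yp2.mulVec h := by
    funext i
    have := congrFun hYph (Sum.inr i)
    rw [hg3]
    simp only [Matrix.fromRows_mulVec, Sum.elim_inr] at this
    exact this.symm
  have hYp2g' : Yp2.mulVec g' = Yp2.mulVec g := by
    rw [hFeq, Matrix.add_mulVec, Matrix.add_mulVec, ← Matrix.mulVec_mulVec,
      ← Matrix.mulVec_mulVec, ← Matrix.mulVec_mulVec, ← Matrix.mulVec_mulVec,
      hUpg', hYp1g', hg1, hYp1g]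
  have hYpg : (Matrix.fromRows Yp1 Yp2).mulVec g = (Matrix.fromRows Yp1 Yp2).mulVec g' := by
    funext x
    cases x with
    | inl i =>
      simp only [Matrix.fromRows_mulVec, Sum.elim_inl]
      rw [hYp1g, hYp1g']
    | inr i =>
      simp only [Matrix.fromRows_mulVec, Sum.elim_inr]
      rw [← hYp2g']
  have hYf : Yf.mulVec g = Yf.mulVec g' :=
    huniq g g' (hg1.trans hUpg'.symm) hYpg (hg4.trans hUfg'.symm)
  have hBini : Bini Up Yp1 Uf Yf = Yf + Yf * (P * Z) := by
    unfold Bini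
    rw [Matrix.mul_add, Matrix.mul_one]
    rfl
  have hBu : Bu Up Yp1 Uf Yf = Yf * (P * Z1) := rfl
  rw [hYf, hBini, hBu, hg'def, hedef]
  simp only [Matrix.add_mulVec, ← Matrix.mulVec_mulVec, Matrix.mulVec_add, hhdef]
  abel
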